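/- Let J be a real antisymmetric d×d matrix, l ∈ ℝᵈ, γ > 0, and set A(μ,ν) = [[−μJ, I],[−I, γI − νJ]] and l̄ = (l, 0) ∈ ℝ^{2d}. Then A(μ,ν) is invertible for all (μ,ν) in some open neighborhood of (0,0); the function Θ(μ,ν) = l̄ · (A(μ,ν)⁻¹ l̄) is twice continuously differentiable near (0,0); its gradient at (0,0) is zero; and its Hessian at (0,0) equals the 2×2 matrix [[−2γ³|Jl|², 2γ|Jl|²],[2γ|Jl|², 0]]. -/

import Mathlib

open Matrix

private lemma contDiff_finset_prod' {ι : Type*} (s : Finset ι) (f : ι → (ℝ × ℝ) → ℝ)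
    (h : ∀ i ∈ s, ContDiff ℝ 2 (f i)) :
    ContDiff ℝ 2 (fun x => ∏ i ∈ s, f i x) := by
  classical
  induction s using Finset.induction_on with
  | empty => simpa using contDiff_const
  | insert a s ha ih =>
      simp only [Finset.prod_insert ha]
      exact (h _ (Finset.mem_insert_self _ _)).mul
        (ih fun i hi => h i (Finset.mem_insert_of_mem hi))

private def entrySmooth {m : Type*} [Fintype m] (f : ℝ × ℝ → Matrix m m ℝ) : Prop :=
  ∀ i j, ContDiff ℝ 2 fun x => f x i j

private lemma entrySmooth.mul {m : Type*} [Fintype m] {f g : ℝ × ℝ → Matrix m m ℝ}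
    (hf : entrySmooth f) (hg : entrySmooth g) : entrySmooth (fun x => f x * g x) := by
  intro i j
  simp only [Matrix.mul_apply]
  exact ContDiff.sum fun k _ => (hf i k).mul (hg k j)

private lemma entrySmooth.det {m : Type*} [Fintype m] [DecidableEq m]
    {f : ℝ × ℝ → Matrix m m ℝ} (hf : entrySmooth f) :
    ContDiff ℝ 2 fun x => (f x).det := by
  simp only [Matrix.det_apply']
  exact ContDiff.sum fun σ _ =>
    contDiff_const.mul (contDiff_finset_prod' _ _ fun i _ => hf (σ i) i)

private lemma entrySmooth.adjugate {m : Type*} [Fintype m] [DecidableEq m]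
    {f : ℝ × ℝ → Matrix m m ℝ} (hf : entrySmooth f) :
    entrySmooth (fun x => (f x).adjugate) := by
  intro i j
  simp only [Matrix.adjugate_apply]
  apply entrySmooth.det
  intro i' j'
  by_cases h : i' = j
  · simp only [Matrix.updateRow_apply, h, if_true]
    exact contDiff_const
  · simp only [Matrix.updateRow_apply, h, if_false]
    exact hf i' j'

private lemma entrySmooth.dotmul {m : Type*} [Fintype m] {f : ℝ × ℝ → Matrix m m ℝ}
    (hf : entrySmooth f) (u v : m → ℝ) :
    ContDiff ℝ 2 fun x => u ⬝ᵥ (f x).mulVec v := by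
  simp only [dotProduct, Matrix.mulVec]
  exact ContDiff.sum fun i _ =>
    contDiff_const.mul (ContDiff.sum fun j _ => (hf i j).mul contDiff_const)

/-- Proposition 4.4 (linear observables): with `A(μ,ν) = [[-μJ, I],[-I, γI - νJ]]`
and `l̄ = (l,0)`, the matrix `A` is invertible near `(0,0)`, the asymptotic
variance `Θ(μ,ν) = l̄ · A(μ,ν)⁻¹ l̄` is twice continuously differentiable near
`(0,0)`, its gradient there vanishes, and its Hessian is
`[[-2γ³|Jl|², 2γ|Jl|²],[2γ|Jl|², 0]]`. -/
theorem stmt5 {d : ℕ} (J : Matrix (Fin d) (Fin d) ℝ) (hJ : Jᵀ = -J)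
    (l : Fin d → ℝ) (γ : ℝ) (hγ : 0 < γ)
    (A : ℝ × ℝ → Matrix (Fin d ⊕ Fin d) (Fin d ⊕ Fin d) ℝ)
    (hA : ∀ x : ℝ × ℝ,
      A x = fromBlocks (-(x.1 • J)) 1 (-1) (γ • (1 : Matrix (Fin d) (Fin d) ℝ) - x.2 • J))
    (lbar : Fin d ⊕ Fin d → ℝ) (hlbar : lbar = Sum.elim l 0)
    (Θ : ℝ × ℝ → ℝ) (hΘ : ∀ x, Θ x = lbar ⬝ᵥ (A x)⁻¹.mulVec lbar) :
    (∃ U : Set (ℝ × ℝ), IsOpen U ∧ ((0 : ℝ), (0 : ℝ)) ∈ U ∧ ∀ x ∈ U, IsUnit (A x)) ∧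
    ContDiffAt ℝ 2 Θ (0, 0) ∧
    fderiv ℝ Θ (0, 0) = 0 ∧
    iteratedFDeriv ℝ 2 Θ (0, 0) ![(1, 0), (1, 0)] =
      -2 * γ ^ 3 * (J.mulVec l ⬝ᵥ J.mulVec l) ∧
    iteratedFDeriv ℝ 2 Θ (0, 0) ![(1, 0), (0, 1)] =
      2 * γ * (J.mulVec l ⬝ᵥ J.mulVec l) ∧
    iteratedFDeriv ℝ 2 Θ (0, 0) ![(0, 1), (1, 0)] =
      2 * γ * (J.mulVec l ⬝ᵥ J.mulVec l) ∧
    iteratedFDeriv ℝ 2 Θ (0, 0) ![(0, 1), (0, 1)] = 0 := by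
  classical
  obtain ⟨a, ha⟩ : ∃ a : ℝ, a = J.mulVec l ⬝ᵥ J.mulVec l := ⟨_, rfl⟩
  obtain ⟨Gm, hGm⟩ : ∃ Gm : ℝ → Matrix (Fin d) (Fin d) ℝ,
      Gm = fun ν => γ • (1 : Matrix (Fin d) (Fin d) ℝ) - ν • J := ⟨_, rfl⟩
  obtain ⟨Cm, hCm⟩ : ∃ Cm : ℝ → Matrix (Fin d) (Fin d) ℝ,
      Cm = fun ν => γ • J - ν • (J * J) := ⟨_, rfl⟩
  obtain ⟨Nm, hNm⟩ : ∃ Nm : ℝ × ℝ → Matrix (Fin d) (Fin d) ℝ,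
      Nm = fun x => 1 - x.1 • Cm x.2 := ⟨_, rfl⟩
  obtain ⟨q, hq⟩ : ∃ q : ℝ × ℝ → ℝ, q = fun x => (Nm x).det := ⟨_, rfl⟩
  obtain ⟨W, hW⟩ : ∃ W : ℝ × ℝ → ℝ,
      W = fun x => l ⬝ᵥ (Gm x.2 * Cm x.2 * Cm x.2 * (Nm x).adjugate).mulVec l := ⟨_, rfl⟩
  obtain ⟨T, hT⟩ : ∃ T : ℝ × ℝ → ℝ, T = fun x => (q x)⁻¹ * W x := ⟨_, rfl⟩
  obtain ⟨F, hF⟩ : ∃ F : ℝ × ℝ → ℝ,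
      F = fun x => γ * (l ⬝ᵥ l) + (2 * γ * a) * (x.1 * x.2) + (x.1 * x.1) * T x := ⟨_, rfl⟩
  -- skew symmetry facts
  have hsk : ∀ u w : Fin d → ℝ, u ⬝ᵥ J.mulVec w = -(J.mulVec u ⬝ᵥ w) := by
    intro u w
    rw [Matrix.dotProduct_mulVec, ← Matrix.mulVec_transpose, hJ, Matrix.neg_mulVec,
      neg_dotProduct]
  have hself : ∀ u : Fin d → ℝ, u ⬝ᵥ J.mulVec u = 0 := by
    intro u
    have h := hsk u u
    have h2 : J.mulVec u ⬝ᵥ u = u ⬝ᵥ J.mulVec u := dotProduct_comm _ _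
    rw [h2] at h
    linarith
  have t1 : l ⬝ᵥ J.mulVec l = 0 := hself l
  have t2 : l ⬝ᵥ J.mulVec (J.mulVec l) = -a := by rw [hsk, ha]
  have t3 : l ⬝ᵥ J.mulVec (J.mulVec (J.mulVec l)) = 0 := by
    rw [hsk, hself (J.mulVec l), neg_zero]
  -- smoothness of the auxiliary scalar functions
  have hJG : ∀ ν : ℝ, J * Gm ν = Cm ν := by
    intro ν
    simp [hGm, hCm, Matrix.mul_sub, Matrix.mul_smul, Matrix.mul_one]
  have hGsm : entrySmooth (fun x : ℝ × ℝ => Gm x.2) := by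
    intro i j
    simp only [hGm, Matrix.sub_apply, Matrix.smul_apply, smul_eq_mul]
    fun_prop
  have hCsm : entrySmooth (fun x : ℝ × ℝ => Cm x.2) := by
    intro i j
    simp only [hCm, Matrix.sub_apply, Matrix.smul_apply, smul_eq_mul]
    fun_prop
  have hNsm : entrySmooth Nm := by
    intro i j
    simp only [hNm, hCm, Matrix.sub_apply, Matrix.smul_apply, smul_eq_mul]
    fun_prop
  have hqc : ContDiff ℝ 2 q := by rw [hq]; exact hNsm.det
  have hWc : ContDiff ℝ 2 W := by
    rw [hW]
    exact (((hGsm.mul hCsm).mul hCsm).mul hNsm.adjugate).dotmul l l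
  -- the open set U
  have hAc : Continuous fun x : ℝ × ℝ => (A x).det := by
    have he : (fun x : ℝ × ℝ => (A x).det) = fun x : ℝ × ℝ =>
        (fromBlocks (-(x.1 • J)) 1 (-1)
          (γ • (1 : Matrix (Fin d) (Fin d) ℝ) - x.2 • J)).det := by
      funext x; rw [hA]
    rw [he]
    apply Continuous.matrix_det
    apply continuous_matrix
    intro i j
    cases i <;> cases j <;>
      simp only [Matrix.fromBlocks_apply₁₁, Matrix.fromBlocks_apply₁₂,
        Matrix.fromBlocks_apply₂₁, Matrix.fromBlocks_apply₂₂, Matrix.neg_apply,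
        Matrix.smul_apply, Matrix.sub_apply, smul_eq_mul] <;> fun_prop
  obtain ⟨U, hU⟩ : ∃ U : Set (ℝ × ℝ),
      U = ((fun x : ℝ × ℝ => (A x).det) ⁻¹' {(0 : ℝ)}ᶜ) ∩ (q ⁻¹' {(0 : ℝ)}ᶜ) := ⟨_, rfl⟩
  have hUopen : IsOpen U := by
    rw [hU]
    exact (isOpen_compl_singleton.preimage hAc).inter
      (isOpen_compl_singleton.preimage hqc.continuous)
  have hUdA : ∀ x ∈ U, (A x).det ≠ 0 := by intro x hx; rw [hU] at hx; exact hx.1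
  have hUq : ∀ x ∈ U, q x ≠ 0 := by intro x hx; rw [hU] at hx; exact hx.2
  have hdA0 : (A (0, 0)).det ≠ 0 := by
    have h1 : A (0, 0) * fromBlocks (γ • (1 : Matrix (Fin d) (Fin d) ℝ)) (-1) 1 0 = 1 := by
      rw [hA]
      simp only [Matrix.fromBlocks_multiply]
      rw [← fromBlocks_one]
      congr 1 <;> simp
    exact (Matrix.isUnit_det_of_right_inverse h1).ne_zero
  have hNm00 : Nm (0, 0) = 1 := by simp [hNm]
  have hq00 : q (0, 0) = 1 := by rw [hq]; simp only [hNm00, det_one]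
  have hUmem : ((0 : ℝ), (0 : ℝ)) ∈ U := by
    rw [hU]
    constructor
    · exact hdA0
    · simp only [Set.mem_preimage, Set.mem_compl_iff, Set.mem_singleton_iff, hq00]
      norm_num
  -- the key identity Θ = F on U
  have hkey : ∀ x ∈ U, Θ x = F x := by
    intro x hx
    have hdq : q x ≠ 0 := hUq x hx
    have hNu : IsUnit (Nm x).det := isUnit_iff_ne_zero.mpr (by rw [hq] at hdq; exact hdq)
    obtain ⟨v, hv⟩ : ∃ v : Fin d → ℝ, v = (Nm x)⁻¹.mulVec l := ⟨_, rfl⟩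
    have hNv : (Nm x).mulVec v = l := by
      rw [hv, Matrix.mulVec_mulVec, Matrix.mul_nonsing_inv _ hNu, Matrix.one_mulVec]
    have hNv' : v - x.1 • (Cm x.2).mulVec v = l := by
      rw [← hNv, hNm]
      simp only [Matrix.sub_mulVec, Matrix.smul_mulVec, Matrix.one_mulVec]
    have hveq : v = l + x.1 • (Cm x.2).mulVec v := by rw [← hNv']; abel
    have hAu : IsUnit (A x).det := isUnit_iff_ne_zero.mpr (hUdA x hx)
    have hfirst : (-(x.1 • J)).mulVec ((Gm x.2).mulVec v)
        + (1 : Matrix (Fin d) (Fin d) ℝ).mulVec v = l := by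
      rw [Matrix.neg_mulVec, Matrix.one_mulVec, Matrix.smul_mulVec,
        Matrix.mulVec_mulVec, hJG]
      rw [← hNv']; abel
    have hsecond : (-1 : Matrix (Fin d) (Fin d) ℝ).mulVec ((Gm x.2).mulVec v)
        + (γ • (1 : Matrix (Fin d) (Fin d) ℝ) - x.2 • J).mulVec v = 0 := by
      rw [Matrix.neg_mulVec, Matrix.one_mulVec]
      simp only [hGm]
      abel
    have h1 : (A x).mulVec (Sum.elim ((Gm x.2).mulVec v) v) = lbar := by
      rw [hA, hlbar, Matrix.fromBlocks_mulVec]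
      simp only [Sum.elim_comp_inl, Sum.elim_comp_inr]
      rw [hfirst, hsecond]
    have hAinv : (A x)⁻¹.mulVec lbar = Sum.elim ((Gm x.2).mulVec v) v := by
      rw [← h1, Matrix.mulVec_mulVec, Matrix.nonsing_inv_mul _ hAu, Matrix.one_mulVec]
    have hΘu : Θ x = l ⬝ᵥ (Gm x.2).mulVec v := by
      rw [hΘ, hAinv, hlbar, sumElim_dotProduct_sumElim, zero_dotProduct,
        add_zero]
    have hexp : (Gm x.2).mulVec v =
        (Gm x.2).mulVec l + x.1 • (Gm x.2).mulVec ((Cm x.2).mulVec l)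
          + (x.1 * x.1) • (Gm x.2).mulVec ((Cm x.2).mulVec ((Cm x.2).mulVec v)) := by
      conv_lhs => rw [hveq, hveq]
      simp only [Matrix.mulVec_add, Matrix.mulVec_smul, smul_add, smul_smul]
      abel
    have s0 : l ⬝ᵥ (Gm x.2).mulVec l = γ * (l ⬝ᵥ l) := by
      rw [hGm]
      simp only [Matrix.sub_mulVec, Matrix.smul_mulVec, Matrix.one_mulVec,
        dotProduct_sub, dotProduct_smul, smul_eq_mul, t1, mul_zero, sub_zero]
    have s1 : l ⬝ᵥ (Gm x.2).mulVec ((Cm x.2).mulVec l) = 2 * γ * x.2 * a := by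
      rw [hGm, hCm]
      simp only [Matrix.sub_mulVec, Matrix.smul_mulVec, Matrix.one_mulVec,
        ← Matrix.mulVec_mulVec, Matrix.mulVec_sub, Matrix.mulVec_smul,
        dotProduct_sub, dotProduct_smul, smul_eq_mul, t1, t2, t3]
      ring
    have s2 : l ⬝ᵥ (Gm x.2).mulVec ((Cm x.2).mulVec ((Cm x.2).mulVec v)) = T x := by
      rw [hT, hW]
      have hvinv : v = (q x)⁻¹ • (Nm x).adjugate.mulVec l := by
        rw [hv, Matrix.inv_def, Ring.inverse_eq_inv, Matrix.smul_mulVec, hq]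
      rw [hvinv]
      simp only [Matrix.mulVec_smul, dotProduct_smul, smul_eq_mul,
        Matrix.mulVec_mulVec, Matrix.mul_assoc]
    rw [hΘu, hexp, hF]
    simp only [dotProduct_add, dotProduct_smul, smul_eq_mul, s0, s1, s2]
    ring
  -- eventual equality and smoothness
  have hev : Θ =ᶠ[nhds ((0 : ℝ), (0 : ℝ))] F :=
    Filter.eventuallyEq_of_mem (hUopen.mem_nhds hUmem) hkey
  have hTx : ∀ x ∈ U, ContDiffAt ℝ 2 T x := by
    intro x hx
    rw [hT]
    exact (hqc.contDiffAt.inv (hUq x hx)).mul hWc.contDiffAt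
  have hFx : ∀ x ∈ U, ContDiffAt ℝ 2 F x := by
    intro x hx
    rw [hF]
    exact (contDiffAt_const.add
      (contDiffAt_const.mul (contDiffAt_fst.mul contDiffAt_snd))).add
      ((contDiffAt_fst.mul contDiffAt_fst).mul (hTx x hx))
  have hΘ2 : ContDiffAt ℝ 2 Θ (0, 0) := (hFx _ hUmem).congr_of_eventuallyEq hev
  -- first derivative of F on U
  have hfderivF : ∀ x ∈ U, ∀ w : ℝ × ℝ, fderiv ℝ F x w =
      (2 * γ * a) * (x.1 * w.2 + x.2 * w.1)
        + ((x.1 * x.1) * (fderiv ℝ T x w) + T x * (x.1 * w.1 + x.1 * w.1)) := by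
    intro x hx w
    have hTd : HasFDerivAt T (fderiv ℝ T x) x :=
      ((hTx x hx).differentiableAt two_ne_zero).hasFDerivAt
    have h := ((hasFDerivAt_const (γ * (l ⬝ᵥ l)) x).add
        ((hasFDerivAt_fst.mul hasFDerivAt_snd).const_mul (2 * γ * a))).add
        ((hasFDerivAt_fst.mul hasFDerivAt_fst).mul hTd)
    rw [hF]
    refine (congrArg (fun L => L w) h.fderiv).trans ?_
    simp only [ContinuousLinearMap.add_apply, ContinuousLinearMap.coe_smul', Pi.smul_apply,
      ContinuousLinearMap.coe_fst', ContinuousLinearMap.coe_snd',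
      ContinuousLinearMap.zero_apply, smul_eq_mul, Pi.mul_apply, Pi.add_apply]
    ring
  -- gradient vanishes
  have hgrad : fderiv ℝ Θ (0, 0) = 0 := by
    apply ContinuousLinearMap.ext
    intro w
    rw [hev.fderiv_eq, hfderivF _ hUmem w]
    simp
  -- value of T at the origin
  have hT00 : T (0, 0) = -(γ ^ 3 * a) := by
    simp only [hT]
    rw [hq00]
    have hW00 : W (0, 0) = -(γ ^ 3 * a) := by
      rw [hW]
      simp only [hNm00, Matrix.adjugate_one, Matrix.mul_one, hGm, hCm]
      simp only [zero_smul, sub_zero, Matrix.smul_mul, Matrix.mul_smul, Matrix.one_mul,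
        smul_smul, Matrix.smul_mulVec, dotProduct_smul, smul_eq_mul,
        ← Matrix.mulVec_mulVec, t2]
      ring
    rw [hW00]
    norm_num
  -- the second derivative
  have hsnd : ∀ v w : ℝ × ℝ, fderiv ℝ (fderiv ℝ Θ) (0, 0) v w =
      (2 * γ * a) * (v.1 * w.2 + v.2 * w.1) + T (0, 0) * (v.1 * w.1 + v.1 * w.1) := by
    intro v w
    have hF2 : ContDiffAt ℝ 2 F (0, 0) := hFx _ hUmem
    have hdF : DifferentiableAt ℝ (fderiv ℝ F) (0, 0) :=
      (hF2.fderiv_right (by norm_num : (1 : WithTop ℕ∞) + 1 ≤ 2)).differentiableAt one_ne_zero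
    rw [(hev.fderiv).fderiv_eq]
    have e2 : fderiv ℝ (fderiv ℝ F) (0, 0) v w
        = fderiv ℝ (fun y => fderiv ℝ F y w) (0, 0) v := by
      rw [fderiv_clm_apply hdF (differentiableAt_const w)]
      simp
    rw [e2]
    have hψ : (fun y => fderiv ℝ F y w) =ᶠ[nhds ((0 : ℝ), (0 : ℝ))]
        (fun y => (2 * γ * a) * (y.1 * w.2 + y.2 * w.1)
          + ((y.1 * y.1) * (fderiv ℝ T y w) + T y * (y.1 * w.1 + y.1 * w.1))) :=
      Filter.eventuallyEq_of_mem (hUopen.mem_nhds hUmem) (fun y hy => hfderivF y hy w)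
    rw [hψ.fderiv_eq]
    have hT2 : ContDiffAt ℝ 2 T (0, 0) := hTx _ hUmem
    have hTd0 : HasFDerivAt T (fderiv ℝ T (0, 0)) (0, 0) :=
      (hT2.differentiableAt two_ne_zero).hasFDerivAt
    have hβ : DifferentiableAt ℝ (fun y => fderiv ℝ T y w) (0, 0) :=
      ((hT2.fderiv_right (by norm_num : (1 : WithTop ℕ∞) + 1 ≤ 2)).differentiableAt
        one_ne_zero).clm_apply (differentiableAt_const w)
    have hhas := (((hasFDerivAt_fst.mul_const w.2).add
        (hasFDerivAt_snd.mul_const w.1)).const_mul (2 * γ * a)).add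
        (((hasFDerivAt_fst.mul hasFDerivAt_fst).mul hβ.hasFDerivAt).add
          (hTd0.mul ((hasFDerivAt_fst.mul_const w.1).add (hasFDerivAt_fst.mul_const w.1))))
    refine (congrArg (fun L => L v) hhas.fderiv).trans ?_
    simp only [ContinuousLinearMap.add_apply, ContinuousLinearMap.coe_smul', Pi.smul_apply,
      ContinuousLinearMap.coe_fst', ContinuousLinearMap.coe_snd',
      ContinuousLinearMap.smulRight_apply, ContinuousLinearMap.zero_apply, smul_eq_mul,
      Pi.mul_apply, Pi.add_apply]
    ring
  refine ⟨⟨U, hUopen, hUmem, fun x hx => (Matrix.isUnit_iff_isUnit_det _).mpr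
      (isUnit_iff_ne_zero.mpr (hUdA x hx))⟩, hΘ2, hgrad, ?_, ?_, ?_, ?_⟩ <;>
    rw [iteratedFDeriv_two_apply] <;>
    simp only [Matrix.cons_val_zero, Matrix.cons_val_one, Matrix.head_cons] <;>
    rw [hsnd, hT00] <;> rw [ha] <;> ring
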